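/- The quotient of the Boolean algebra 𝒫(ω₁) by the ideal of countable subsets of ω₁ contains a strictly increasing chain of order type ω₂: there is a family (A_γ)_{γ<ω₂} of subsets of ω₁ such that for all γ < δ < ω₂, the set A_γ \ A_δ is countable and the set A_δ \ A_γ is uncountable. -/

import Mathlib

open Set Cardinal

noncomputable section Omega2Chain

namespace Omega2Chain

universe u w

abbrev T1 : Type (u + 1) := {α : Ordinal.{u} // α < (Cardinal.aleph 1).ord}

lemma mk_T1 : #T1.{u} = Cardinal.lift.{u + 1, u} (Cardinal.aleph.{u} 1) := by
  have h1 : #T1.{u} = #(Set.Iio ((Cardinal.aleph 1).ord : Ordinal.{u})) :=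
    Cardinal.mk_congr (Equiv.subtypeEquivRight fun x => Iff.rfl)
  rw [h1, Ordinal.mk_Iio_ordinal, Cardinal.card_ord]

lemma card_le_of_lt_omega2 {γ : Ordinal.{u}} (h2 : γ < (Cardinal.aleph 2).ord) :
    γ.card ≤ Cardinal.aleph 1 := by
  have h := Cardinal.lt_ord.mp h2
  have h21 : (2 : Ordinal) = Order.succ 1 := by
    rw [← Ordinal.add_one_eq_succ]; norm_num
  rwa [h21, Cardinal.aleph_succ, Order.lt_succ_iff] at h

lemma exists_surj {γ : Ordinal.{w}} (h0 : γ ≠ 0) (h2 : γ < (Cardinal.aleph 2).ord) :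
    ∃ s : T1.{u} → Ordinal.{w}, (∀ i, s i < γ) ∧ ∀ ξ, ξ < γ → ∃ i, s i = ξ := by
  have hcard : Cardinal.lift.{max (w + 1) (u + 1)} γ.card
      ≤ Cardinal.lift.{max (w + 1) (u + 1)} (Cardinal.aleph.{u} 1) := by
    have ha : Cardinal.lift.{max (w + 1) (u + 1)} γ.card
        ≤ Cardinal.lift.{max (w + 1) (u + 1)} (Cardinal.aleph.{w} 1) :=
      Cardinal.lift_le.mpr (card_le_of_lt_omega2 h2)
    have hb : Cardinal.lift.{max (w + 1) (u + 1)} (Cardinal.aleph.{w} 1)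
        = Cardinal.lift.{max (w + 1) (u + 1)} (Cardinal.aleph.{u} 1) := by
      rw [show (Cardinal.aleph.{w} 1) = Order.succ ℵ₀ from (Cardinal.succ_aleph0).symm,
        show (Cardinal.aleph.{u} 1) = Order.succ ℵ₀ from (Cardinal.succ_aleph0).symm,
        Cardinal.lift_succ, Cardinal.lift_succ, Cardinal.lift_aleph0, Cardinal.lift_aleph0]
    rwa [hb] at ha
  have hle : Cardinal.lift.{u + 1} #(Set.Iio γ) ≤ Cardinal.lift.{w + 1} #T1.{u} := by
    rw [Ordinal.mk_Iio_ordinal, mk_T1, Cardinal.lift_lift, Cardinal.lift_lift]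
    exact hcard
  obtain ⟨emb⟩ := Cardinal.lift_mk_le'.mp hle
  haveI hne : Nonempty (Set.Iio γ) := ⟨⟨0, pos_iff_ne_zero.mpr h0⟩⟩
  refine ⟨fun i => ((Function.invFun emb i : Set.Iio γ) : Ordinal.{w}),
    fun i => ?_, fun ξ hξ => ?_⟩
  · exact (Function.invFun emb i).2
  · obtain ⟨i, hi⟩ := Function.invFun_surjective emb.injective ⟨ξ, hξ⟩
    refine ⟨i, ?_⟩
    show ((Function.invFun emb i : Set.Iio γ) : Ordinal.{w}) = ξ
    rw [hi]

/-- A choice of surjection from `ω₁` onto `Iio γ` (junk if `γ` is `0` or too big). -/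
def sfun (γ : Ordinal.{w}) : T1.{u} → Ordinal.{w} :=
  if h : γ ≠ 0 ∧ γ < (Cardinal.aleph 2).ord then Classical.choose (exists_surj h.1 h.2)
  else fun _ => 0

lemma sfun_lt {γ : Ordinal.{w}} (h0 : γ ≠ 0) (i : T1.{u}) : sfun γ i < γ := by
  unfold sfun
  split
  · next h => exact (Classical.choose_spec (exists_surj h.1 h.2)).1 i
  · exact pos_iff_ne_zero.mpr h0

lemma sfun_surj {γ : Ordinal.{w}} (h0 : γ ≠ 0) (h2 : γ < (Cardinal.aleph 2).ord)
    {ξ : Ordinal.{w}} (hξ : ξ < γ) : ∃ i, sfun γ i = ξ := by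
  unfold sfun
  rw [dif_pos ⟨h0, h2⟩]
  exact (Classical.choose_spec (exists_surj h0 h2)).2 ξ hξ

/-- The element of `T1` corresponding to `j` in the canonical enumeration of `Iio α`. -/
def elemOf (α : T1.{u}) (j : (α : Ordinal.{u}).ToType) : T1.{u} :=
  ⟨((Ordinal.ToType.mk (o := (α : Ordinal.{u}))).symm j : Set.Iio (α : Ordinal.{u})),
    lt_trans (((Ordinal.ToType.mk (o := (α : Ordinal.{u}))).symm j).2) α.2⟩

lemma elemOf_surj {α i : T1.{u}} (h : i < α) : ∃ j, elemOf α j = i := by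
  refine ⟨Ordinal.ToType.mk (o := (α : Ordinal.{u})) ⟨(i : Ordinal.{u}), h⟩, ?_⟩
  have h2 := (Ordinal.ToType.mk (o := (α : Ordinal.{u}))).symm_apply_apply ⟨(i : Ordinal.{u}), h⟩
  exact Subtype.ext (congrArg (fun z : Set.Iio (α : Ordinal.{u}) => (z : Ordinal.{u})) h2)

/-- The increasing (mod countable) family of functions `ω₁ → Ord`, by recursion on `γ`. -/
def chainF : Ordinal.{w} → T1.{u} → Ordinal.{u} :=
  Ordinal.lt_wf.fix fun γ IH =>
    if h : γ = 0 then fun _ => 0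
    else fun α =>
      (⨆ j : (α : Ordinal.{u}).ToType, IH (sfun γ (elemOf α j)) (sfun_lt h _) α) + 1

lemma chainF_eq {γ : Ordinal.{w}} (h : γ ≠ 0) (α : T1.{u}) :
    chainF γ α
      = (⨆ j : (α : Ordinal.{u}).ToType, chainF (sfun γ (elemOf α j)) α) + 1 := by
  unfold chainF
  rw [WellFounded.fix_eq, dif_neg h]

lemma chainF_zero (α : T1.{u}) : chainF.{u, w} 0 α = 0 := by
  unfold chainF
  rw [WellFounded.fix_eq, dif_pos rfl]

lemma chainF_lt (γ : Ordinal.{w}) (α : T1.{u}) : chainF γ α < (Cardinal.aleph 1).ord := by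
  induction γ using Ordinal.induction with
  | h γ IH =>
    by_cases h : γ = 0
    · subst h
      rw [chainF_zero]
      refine Cardinal.lt_ord.mpr ?_
      simpa using Cardinal.aleph_pos 1
    · rw [chainF_eq h α, Ordinal.add_one_eq_succ]
      refine (Cardinal.isSuccLimit_ord (Cardinal.aleph0_le_aleph 1)).succ_lt ?_
      refine Cardinal.iSup_lt_ord_of_isRegular Cardinal.isRegular_aleph_one ?_ ?_
      · rw [Cardinal.mk_toType]
        exact Cardinal.lt_ord.mp α.2
      · exact fun j => IH _ (sfun_lt h _)

lemma chainF_dom {γ δ : Ordinal.{w}} (h0 : δ ≠ 0) (h2 : δ < (Cardinal.aleph 2).ord)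
    (hγδ : γ < δ) : ∃ i₀ : T1.{u}, ∀ α : T1.{u}, i₀ < α → chainF γ α < chainF δ α := by
  obtain ⟨i₀, hi₀⟩ := sfun_surj h0 h2 hγδ
  refine ⟨i₀, fun α hα => ?_⟩
  rw [chainF_eq h0 α]
  obtain ⟨j, hj⟩ := elemOf_surj hα
  have hle : chainF γ α
      ≤ ⨆ j : (α : Ordinal.{u}).ToType, chainF (sfun δ (elemOf α j)) α := by
    have := Ordinal.le_iSup
      (fun j : (α : Ordinal.{u}).ToType => chainF (sfun δ (elemOf α j)) α) j
    rwa [hj, hi₀] at this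
  rw [Ordinal.add_one_eq_succ]
  exact hle.trans_lt (Order.lt_succ _)

/-- slices of `T1` below a small ordinal are countable -/
lemma countable_below {c : Ordinal.{u}} (hc : c < (Cardinal.aleph 1).ord) :
    {β : T1.{u} | (β : Ordinal.{u}) < c}.Countable := by
  rw [← Cardinal.le_aleph0_iff_set_countable]
  have hinj : Function.Injective
      (fun β : {β : T1.{u} | (β : Ordinal.{u}) < c} =>
        (⟨((β : T1.{u}) : Ordinal.{u}), β.2⟩ : Set.Iio c)) := by
    intro x y hxy
    ext
    exact congrArg (fun z : Set.Iio c => (z : Ordinal.{u})) hxy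
  calc #{β : T1.{u} | (β : Ordinal.{u}) < c} ≤ #(Set.Iio c) :=
        Cardinal.mk_le_of_injective hinj
    _ = Cardinal.lift.{u + 1} c.card := Ordinal.mk_Iio_ordinal c
    _ ≤ Cardinal.lift.{u + 1} ℵ₀ := by
        refine Cardinal.lift_le.mpr ?_
        have := Cardinal.lt_ord.mp hc
        rwa [← Cardinal.succ_aleph0, Order.lt_succ_iff] at this
    _ = ℵ₀ := Cardinal.lift_aleph0

lemma countable_Iic (i₀ : T1.{u}) : {α : T1.{u} | α ≤ i₀}.Countable := by
  have hlt : (i₀ : Ordinal.{u}) + 1 < (Cardinal.aleph 1).ord := by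
    rw [Ordinal.add_one_eq_succ]
    exact (Cardinal.isSuccLimit_ord (Cardinal.aleph0_le_aleph 1)).succ_lt i₀.2
  refine (countable_below hlt).mono ?_
  intro α hα
  simp only [mem_setOf_eq] at *
  rw [Ordinal.add_one_eq_succ, Order.lt_succ_iff]
  exact_mod_cast hα

/-- A pairing bijection `ω₁ ≃ ω₁ × ω₁`. -/
def pairEquiv : T1.{u} ≃ T1.{u} × T1.{u} := by
  refine Classical.choice (Cardinal.eq.mp ?_)
  rw [← Cardinal.mul_def, mk_T1,
    Cardinal.mul_eq_self (Cardinal.aleph0_le_lift.mpr (Cardinal.aleph0_le_aleph 1))]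

lemma not_countable_compl_Iic (i₀ : T1.{u}) : ¬ {α : T1.{u} | i₀ < α}.Countable := by
  intro hcts
  have huniv : (Set.univ : Set T1.{u}).Countable := by
    have h : (Set.univ : Set T1.{u}) = {α : T1.{u} | α ≤ i₀} ∪ {α : T1.{u} | i₀ < α} := by
      ext α; simp [le_or_gt]
    rw [h]
    exact (countable_Iic i₀).union hcts
  have hle : #T1.{u} ≤ ℵ₀ := by
    rw [← Cardinal.mk_univ]
    exact huniv.le_aleph0
  rw [mk_T1, ← Cardinal.lift_aleph0.{u + 1, u}, Cardinal.lift_le] at hle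
  exact absurd hle (not_le.mpr aleph0_lt_aleph_one)

end Omega2Chain

end Omega2Chain

open Omega2Chain in
theorem exists_chain_aux.{v, v2} :
    ∃ A : {γ : Ordinal.{v} // γ < (Cardinal.aleph 2).ord} →
          Set {α : Ordinal.{v2} // α < (Cardinal.aleph 1).ord},
      ∀ γ δ : {γ : Ordinal.{v} // γ < (Cardinal.aleph 2).ord}, γ < δ →
        (A γ \ A δ).Countable ∧ ¬ (A δ \ A γ).Countable := by
  classical
  refine ⟨fun γ => {x : T1.{v2} |
    ((pairEquiv x).2 : Ordinal.{v2}) < chainF γ.1 (pairEquiv x).1}, ?_⟩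
  intro γ δ hγδ
  have hγδ' : (γ : Ordinal.{v}) < (δ : Ordinal.{v}) := hγδ
  have hδ0 : (δ : Ordinal.{v}) ≠ 0 := by
    intro h
    exact absurd (h ▸ hγδ') zero_le.not_gt
  obtain ⟨i₀, hi₀⟩ := chainF_dom hδ0 δ.2 hγδ'
  constructor
  · -- A γ \ A δ is countable
    have hsub : {x : T1.{v2} | ((pairEquiv x).2 : Ordinal.{v2}) < chainF γ.1 (pairEquiv x).1} \
        {x : T1.{v2} | ((pairEquiv x).2 : Ordinal.{v2}) < chainF δ.1 (pairEquiv x).1} ⊆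
        pairEquiv ⁻¹' (⋃ α ∈ {α : T1.{v2} | α ≤ i₀},
          {α} ×ˢ {β : T1.{v2} | (β : Ordinal.{v2}) < chainF γ.1 α}) := by
      rintro x ⟨hx1, hx2⟩
      simp only [mem_setOf_eq] at hx1 hx2
      have hle : (pairEquiv x).1 ≤ i₀ := by
        by_contra hgt
        exact hx2 (hx1.trans (hi₀ _ (not_le.mp hgt)))
      simp only [mem_preimage, mem_iUnion, mem_setOf_eq]
      exact ⟨(pairEquiv x).1, hle, Set.mem_prod.mpr ⟨rfl, hx1⟩⟩
    refine Set.Countable.mono hsub ?_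
    refine Set.Countable.preimage ?_ pairEquiv.injective
    refine Set.Countable.biUnion (countable_Iic i₀) ?_
    intro α _
    exact (Set.countable_singleton α).prod (countable_below (chainF_lt γ.1 α))
  · -- A δ \ A γ is not countable
    intro hcts
    set g : T1.{v2} → T1.{v2} :=
      fun α => pairEquiv.symm (α, ⟨chainF γ.1 α, chainF_lt γ.1 α⟩) with hg
    have hginj : Function.Injective g := by
      intro a b hab
      have h2 := pairEquiv.symm.injective hab
      exact congrArg Prod.fst h2
    have hmem : {α : T1.{v2} | i₀ < α} ⊆ g ⁻¹' ({x : T1.{v2} |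
          ((pairEquiv x).2 : Ordinal.{v2}) < chainF δ.1 (pairEquiv x).1} \
        {x : T1.{v2} | ((pairEquiv x).2 : Ordinal.{v2}) < chainF γ.1 (pairEquiv x).1}) := by
      intro α hα
      simp only [mem_preimage, mem_diff, mem_setOf_eq, hg, Equiv.apply_symm_apply]
      exact ⟨hi₀ α hα, lt_irrefl _⟩
    exact not_countable_compl_Iic i₀ ((hcts.preimage hginj).mono hmem)

/-- `𝒫(ω₁)` modulo the ideal of countable sets contains a strictly increasing chain of
order type `ω₂`. -/
theorem exists_chain_omega2_in_power_omega1_mod_countable :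
    ∃ A : {γ : Ordinal // γ < (Cardinal.aleph 2).ord} →
          Set {α : Ordinal // α < (Cardinal.aleph 1).ord},
      ∀ γ δ : {γ : Ordinal // γ < (Cardinal.aleph 2).ord}, γ < δ →
        (A γ \ A δ).Countable ∧ ¬ (A δ \ A γ).Countable :=
  exists_chain_aux
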